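/- Suppose the interpolation operator I_h satisfies ‖v − I_h v‖_{L²(Ω)} ≤ C h² ‖v‖_{H²(Ω)}, the Ritz map satisfies ‖R_h u − u‖_{L²(Ω)} ≤ C h² ‖u‖₂, and the inverse estimate ‖χ‖_{L^∞} ≤ c h^{−d/2} ‖χ‖_{L²} holds on the finite element space. If moreover ‖I_h v − v‖_{L^∞(Ω)} ≤ C‖v‖_{L^∞(Ω)}, then for d ≤ 4: ‖R_h u‖_{L^∞(Ω_h-norm)} ≤ C'(‖u‖₂ + ‖u‖_{L^∞(Ω)}) with C' independent of h, for all u ∈ H² ∩ L^∞. -/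
import Mathlib


/-- Uniform `L^∞` bound on the Ritz map: combining the `L²` interpolation and Ritz
error bounds, the inverse estimate `‖χ‖_{L^∞} ≤ c h^{−d/2} ‖χ‖_{L²}` on the finite
element space, and the `L^∞` interpolation bound, one gets for `d ≤ 4` and `h ≤ 1`
that `‖R_h u‖_{L^∞} ≤ C'(‖u‖₂ + ‖u‖_{L^∞})` with `C'` independent of `h`. -/
theorem stmt_17
    {X : Type*} [AddCommGroup X]
    (nL2 nLinf nH2 : X → ℝ)
    (hL2tri : ∀ x y : X, nL2 (x + y) ≤ nL2 x + nL2 y)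
    (hL2neg : ∀ x : X, nL2 (-x) = nL2 x)
    (hLinftri : ∀ x y : X, nLinf (x + y) ≤ nLinf x + nLinf y)
    (hLinfneg : ∀ x : X, nLinf (-x) = nLinf x)
    (hL2nn : ∀ x : X, 0 ≤ nL2 x) (hLinfnn : ∀ x : X, 0 ≤ nLinf x)
    (hH2nn : ∀ x : X, 0 ≤ nH2 x)
    (d : ℕ) (hd : d ≤ 4)
    (S : ℝ → Set X) (Ih Rh : ℝ → X → X)
    (C cinv : ℝ) (hC : 0 < C) (hcinv : 0 < cinv)
    (hIhS : ∀ h : ℝ, ∀ v : X, Ih h v ∈ S h)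
    (hRhS : ∀ h : ℝ, ∀ u : X, Rh h u ∈ S h)
    (hSsub : ∀ h : ℝ, ∀ x ∈ S h, ∀ y ∈ S h, x - y ∈ S h)
    (hinv : ∀ h : ℝ, 0 < h → ∀ χ ∈ S h,
      nLinf χ ≤ cinv * h ^ (-(d : ℝ) / 2) * nL2 χ)
    (hinterpL2 : ∀ h : ℝ, 0 < h → ∀ v : X, nL2 (v - Ih h v) ≤ C * h ^ 2 * nH2 v)
    (hritz : ∀ h : ℝ, 0 < h → ∀ u : X, nL2 (Rh h u - u) ≤ C * h ^ 2 * nH2 u)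
    (hinterpLinf : ∀ h : ℝ, 0 < h → ∀ v : X, nLinf (Ih h v - v) ≤ C * nLinf v) :
    ∃ C' : ℝ, 0 < C' ∧ ∀ h : ℝ, 0 < h → h ≤ 1 → ∀ u : X,
      nLinf (Rh h u) ≤ C' * (nH2 u + nLinf u) := by
  refine ⟨2 * C * cinv + C + 1, by positivity, fun h hp h1 u => ?_⟩
  -- L² bound on Rh u − Ih u
  have hχ : Rh h u - Ih h u ∈ S h := hSsub h _ (hRhS h u) _ (hIhS h u)
  have hL2χ : nL2 (Rh h u - Ih h u) ≤ 2 * C * h ^ 2 * nH2 u := by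
    have : Rh h u - Ih h u = (Rh h u - u) + (u - Ih h u) := by abel
    rw [this]
    calc nL2 ((Rh h u - u) + (u - Ih h u)) ≤ nL2 (Rh h u - u) + nL2 (u - Ih h u) :=
          hL2tri _ _
      _ ≤ C * h ^ 2 * nH2 u + C * h ^ 2 * nH2 u := add_le_add (hritz h hp u) (hinterpL2 h hp u)
      _ = 2 * C * h ^ 2 * nH2 u := by ring
  have hpow : h ^ (-(d : ℝ) / 2) * h ^ 2 ≤ 1 := by
    have : h ^ (-(d : ℝ) / 2) * h ^ 2 = h ^ (-(d : ℝ) / 2 + 2) := by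
      rw [Real.rpow_add hp]
      norm_num [Real.rpow_natCast]
    rw [this]
    apply Real.rpow_le_one hp.le h1
    have : (d : ℝ) ≤ 4 := by exact_mod_cast hd
    linarith
  have h1' : nLinf (Rh h u - Ih h u) ≤ 2 * C * cinv * nH2 u := by
    calc nLinf (Rh h u - Ih h u) ≤ cinv * h ^ (-(d : ℝ) / 2) * nL2 (Rh h u - Ih h u) :=
          hinv h hp _ hχ
      _ ≤ cinv * h ^ (-(d : ℝ) / 2) * (2 * C * h ^ 2 * nH2 u) := by
          apply mul_le_mul_of_nonneg_left hL2χ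
          positivity
      _ = 2 * C * cinv * nH2 u * (h ^ (-(d : ℝ) / 2) * h ^ 2) := by ring
      _ ≤ 2 * C * cinv * nH2 u * 1 := by
          have := hH2nn u
          apply mul_le_mul_of_nonneg_left hpow
          positivity
      _ = 2 * C * cinv * nH2 u := by ring
  have h2' : nLinf (Ih h u - u) ≤ C * nLinf u := hinterpLinf h hp u
  have hsplit : nLinf (Rh h u) ≤ nLinf (Rh h u - Ih h u) + nLinf (Ih h u - u) + nLinf u := by
    have e : Rh h u = (Rh h u - Ih h u) + (Ih h u - u) + u := by abel
    calc nLinf (Rh h u) = nLinf ((Rh h u - Ih h u) + (Ih h u - u) + u) := by rw [← e]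
      _ ≤ nLinf ((Rh h u - Ih h u) + (Ih h u - u)) + nLinf u := hLinftri _ _
      _ ≤ nLinf (Rh h u - Ih h u) + nLinf (Ih h u - u) + nLinf u := by
          linarith [hLinftri (Rh h u - Ih h u) (Ih h u - u)]
  have := hLinfnn u
  have := hH2nn u
  nlinarith [mul_nonneg hC.le (hH2nn u), mul_nonneg (mul_nonneg (mul_nonneg (by norm_num : (0:ℝ) ≤ 2) hC.le) hcinv.le) (hLinfnn u)]
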